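/- arXiv:2408.09080 — 6 statements merged into one kernel-verified Lean document; each statement's English description precedes it below -/
import Mathlib

section
/- A relation R ⊆ A⁻ × B⁺ is compatible with polarities 𝒜 and ℬ (i.e., cl_𝒜 ∘ R↓ = R↓ = R↓ ∘ cl^ℬ) if and only if for all X ⊆ A⁻ and Y ⊆ B⁺: X × Y ⊆ R implies cl_𝒜(X) × cl^ℬ(Y) ⊆ R. -/
def down {A B : Type*} (R : A → B → Prop) (Y : Set B) : Set A := {a | ∀ b ∈ Y, R a b}
def up {A B : Type*} (R : A → B → Prop) (X : Set A) : Set B := {b | ∀ a ∈ X, R a b}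
def bracket {A B : Type*} (f : Set B → Set A) : A → B → Prop := fun a b => a ∈ f {b}
def Compat {Am Ap Bm Bp : Type*} (A : Am → Ap → Prop) (B : Bm → Bp → Prop)
    (R : Am → Bp → Prop) : Prop :=
  (∀ Y : Set Bp, down A (up A (down R Y)) = down R Y) ∧
  (∀ Y : Set Bp, down R (up B (down B Y)) = down R Y)
def comp {Am Bm Bp Cp : Type*} (R : Am → Bp → Prop) (B : Bm → Bp → Prop)
    (S : Bm → Cp → Prop) : Am → Cp → Prop :=
  fun a c => a ∈ down R (up B (down S {c}))

theorem stmt6 {Am Ap Bm Bp : Type*} (A : Am → Ap → Prop) (B : Bm → Bp → Prop)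
    (R : Am → Bp → Prop) :
    Compat A B R ↔
      ∀ (X : Set Am) (Y : Set Bp), (∀ a ∈ X, ∀ β ∈ Y, R a β) →
        ∀ a ∈ down A (up A X), ∀ β ∈ up B (down B Y), R a β := by
  constructor
  · rintro ⟨h1, h2⟩ X Y hXY a ha β hβ
    have hX : X ⊆ down R Y := fun x hx b hb => hXY x hx b hb
    have hmono : down A (up A X) ⊆ down A (up A (down R Y)) := by
      intro x hx p hp
      exact hx p (fun a' ha' => hp a' (hX ha'))
    have ha' : a ∈ down R Y := (h1 Y) ▸ hmono ha
    have : a ∈ down R (up B (down B Y)) := (h2 Y).symm ▸ ha'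
    exact this β hβ
  · intro h
    constructor
    · intro Y
      apply Set.Subset.antisymm
      · intro a ha β hβ
        exact h (down R Y) Y (fun x hx b hb => hx b hb) a ha β
          (fun b hb => hb β hβ)
      · intro a ha p hp
        exact hp a ha
    · intro Y
      apply Set.Subset.antisymm
      · intro a ha β hβ
        exact ha β (fun b hb => hb β hβ)
      · intro a ha β hβ
        exact h {a} Y (by rintro x rfl b hb; exact ha b hb) a
          (fun p hp => hp a rfl) β hβ
end

section
/- Suppose R ⊆ A⁻ × B⁺ is compatible with polarities 𝒜 and ℬ, and S ⊆ B⁻ × C⁺ is compatible with ℬ and 𝒞. Then the composite map R↓ ∘ ℬ↑ ∘ S↓ : P(C⁺) → P(A⁻) sends arbitrary unions to intersections. -/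
lemma down_sUnion {A B : Type*} (R : A → B → Prop) (𝒴 : Set (Set B)) :
    down R (⋃₀ 𝒴) = ⋂ Y ∈ 𝒴, down R Y := by
  ext a; simp [down]; tauto

lemma down_biUnion {A B I : Type*} (R : A → B → Prop) (s : Set I) (f : I → Set B) :
    down R (⋃ i ∈ s, f i) = ⋂ i ∈ s, down R (f i) := by
  ext a; simp [down]; tauto

theorem stmt7 {Am Ap Bm Bp Cm Cp : Type*} (A : Am → Ap → Prop) (B : Bm → Bp → Prop)
    (C : Cm → Cp → Prop) (R : Am → Bp → Prop) (S : Bm → Cp → Prop)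
    (hR : Compat A B R) (hS : Compat B C S) :
    ∀ 𝒵 : Set (Set Cp),
      down R (up B (down S (⋃₀ 𝒵))) = ⋂ Z ∈ 𝒵, down R (up B (down S Z)) := by
  intro 𝒵
  have h1 : down S (⋃₀ 𝒵) = down B (⋃ Z ∈ 𝒵, up B (down S Z)) := by
    rw [down_sUnion, down_biUnion]
    exact Set.iInter₂_congr (fun Z _ => (hS.1 Z).symm)
  rw [h1, hR.2, down_biUnion]
end

section
/- Composition in the category of polarities preserves arbitrary intersections in the middle argument: for compatible relations Q : 𝒜 → ℬ, Rᵢ : ℬ → 𝒞 (i ∈ I), and S : 𝒞 → 𝒟, one has Q ⨟ (⋂ᵢ Rᵢ) ⨟ S = ⋂ᵢ (Q ⨟ Rᵢ ⨟ S). -/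
lemma down_iUnion {A B : Type*} {ι : Type*} (R : A → B → Prop) (Y : ι → Set B) :
    down R (⋃ i, Y i) = ⋂ i, down R (Y i) := by
  ext a; simp [down]; tauto

lemma key {Am Bm Bp : Type*} {ι : Type*} (B : Bm → Bp → Prop) (Q : Am → Bp → Prop)
    (hQ : ∀ Y : Set Bp, down Q (up B (down B Y)) = down Q Y)
    (X : ι → Set Bm) (hX : ∀ i, down B (up B (X i)) = X i) :
    down Q (up B (⋂ i, X i)) = ⋂ i, down Q (up B (X i)) := by
  have h1 : (⋂ i, X i) = down B (⋃ i, up B (X i)) := by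
    rw [down_iUnion]
    exact Set.iInter_congr fun i => (hX i).symm
  rw [h1, hQ, down_iUnion]

theorem stmt12 {Am Ap Bm Bp Cm Cp Dm Dp : Type*} {ι : Type*}
    (A : Am → Ap → Prop) (B : Bm → Bp → Prop) (C : Cm → Cp → Prop) (D : Dm → Dp → Prop)
    (Q : Am → Bp → Prop) (R : ι → Bm → Cp → Prop) (S : Cm → Dp → Prop)
    (hQ : Compat A B Q) (hR : ∀ i, Compat B C (R i)) (hS : Compat C D S) :
    comp (comp Q B (fun b γ => ∀ i, R i b γ)) C S =
      fun a δ => ∀ i, comp (comp Q B (R i)) C S a δ := by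
  have hpt : ∀ γ : Cp, down Q (up B (down (fun b γ' => ∀ i, R i b γ') {γ})) =
      ⋂ i, down Q (up B (down (R i) {γ})) := by
    intro γ
    have h2 : down (fun b γ' => ∀ i, R i b γ') ({γ} : Set Cp) =
        ⋂ i, down (R i) {γ} := by
      ext b; simp [down]
    rw [h2]
    exact key B Q hQ.2 _ (fun i => (hR i).1 {γ})
  funext a δ
  apply propext
  constructor
  · intro h i γ hγ
    have := h γ hγ
    rw [show (comp Q B fun b γ' => ∀ i, R i b γ') a γ ↔
        a ∈ down Q (up B (down (fun b γ' => ∀ i, R i b γ') {γ})) from Iff.rfl,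
      hpt γ] at this
    exact Set.mem_iInter.mp this i
  · intro h γ hγ
    show a ∈ down Q (up B (down (fun b γ' => ∀ i, R i b γ') {γ}))
    rw [hpt γ]
    exact Set.mem_iInter.mpr fun i => h i γ hγ
end

section
/- The category Pol of polarities and compatible relations is self-dual: the assignment sending a polarity 𝒜 = (A⁻,A⁺;𝒜) to 𝒜^∂ = (A⁺,A⁻;𝒜ᵀ) and a compatible relation R : 𝒜 → ℬ to its converse Rᵀ : ℬ^∂ → 𝒜^∂ is a contravariant functor whose square is the identity, hence a dual isomorphism of categories. -/
lemma down_anti {A B : Type*} (R : A → B → Prop) {Y Y' : Set B} (h : Y ⊆ Y') :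
    down R Y' ⊆ down R Y := fun a ha b hb => ha b (h hb)

lemma up_anti {A B : Type*} (R : A → B → Prop) {X X' : Set A} (h : X ⊆ X') :
    up R X' ⊆ up R X := fun b hb a ha => hb a (h ha)

lemma subset_downUp {A B : Type*} (R : A → B → Prop) (X : Set A) :
    X ⊆ down R (up R X) := fun a ha b hb => hb a ha

lemma subset_upDown {A B : Type*} (R : A → B → Prop) (Y : Set B) :
    Y ⊆ up R (down R Y) := fun b hb a ha => ha b hb

lemma down_flip {A B : Type*} (R : A → B → Prop) : down (flip R) = up R := rfl
lemma up_flip {A B : Type*} (R : A → B → Prop) : up (flip R) = down R := rfl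

lemma mem_down_singleton {A B : Type*} {R : A → B → Prop} {a : A} {b : B} :
    a ∈ down R {b} ↔ R a b := by simp [down]

/-- `up R {a}` is B-closed. -/
lemma up_singleton_closed {Am Ap Bm Bp : Type*} {A : Am → Ap → Prop} {B : Bm → Bp → Prop}
    {R : Am → Bp → Prop} (h : Compat A B R) (a : Am) :
    up B (down B (up R {a})) ⊆ up R {a} := by
  have hmem : a ∈ down R (up B (down B (up R {a}))) := by
    rw [h.2]
    exact fun b' hb' => hb' a rfl
  intro b hb a' ha'
  have ea : a' = a := ha'
  rw [ea]
  exact hmem b hb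

/-- `up R X` is B-closed. -/
lemma up_closed {Am Ap Bm Bp : Type*} {A : Am → Ap → Prop} {B : Bm → Bp → Prop}
    {R : Am → Bp → Prop} (h : Compat A B R) (X : Set Am) :
    up B (down B (up R X)) ⊆ up R X := by
  intro b hb a ha
  have hsub : up R X ⊆ up R {a} := up_anti R (by simpa using ha)
  have : b ∈ up B (down B (up R {a})) := up_anti B (down_anti B hsub) hb
  exact up_singleton_closed h a this a rfl

theorem stmt13 {Am Ap Bm Bp Cm Cp : Type*}
    (A : Am → Ap → Prop) (B : Bm → Bp → Prop) (C : Cm → Cp → Prop) :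
    (∀ R : Am → Bp → Prop, Compat A B R →
      Compat (flip B) (flip A) (flip R)) ∧
    (∀ (R : Am → Bp → Prop) (S : Bm → Cp → Prop), Compat A B R → Compat B C S →
      flip (comp R B S) = comp (flip S) (flip B) (flip R)) ∧
    (∀ R : Am → Bp → Prop, flip (flip R) = R) := by
  refine ⟨?_, ?_, fun R => rfl⟩
  · intro R h
    constructor
    · intro X
      show up B (down B (up R X)) = up R X
      exact Set.Subset.antisymm (up_closed h X) (subset_upDown B (up R X))
    · intro X
      show up R (down A (up A X)) = up R X
      apply Set.Subset.antisymm (up_anti R (subset_downUp A X))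
      intro b hb a ha
      have hXb : X ⊆ down R {b} := fun a' ha' => by
        simpa [down] using hb a' ha'
      have : down A (up A X) ⊆ down A (up A (down R {b})) :=
        down_anti A (up_anti A hXb)
      have := this ha
      rw [h.1 {b}] at this
      exact mem_down_singleton.mp this
  · intro R S hR hS
    funext c a
    show comp R B S a c = comp (flip S) (flip B) (flip R) c a
    apply propext
    constructor
    · intro hLHS b hb
      -- hLHS : a ∈ down R (up B (down S {c}))
      -- i.e. up B (down S {c}) ⊆ up R {a}
      have hsub : up B (down S {c}) ⊆ up R {a} := by
        intro b' hb' a' ha'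
        rcases ha' with rfl
        exact hLHS b' hb'
      have : down B (up R {a}) ⊆ down B (up B (down S {c})) := down_anti B hsub
      have hmem := this hb
      rw [hS.1 {c}] at hmem
      exact hmem c rfl
    · intro hRHS b hb
      -- hRHS : c ∈ up S (down B (up R {a})), i.e. down B (up R {a}) ⊆ down S {c}
      have hsub : down B (up R {a}) ⊆ down S {c} := fun b' hb' c' hc' => by
        rcases hc' with rfl; exact hRHS b' hb'
      have : up B (down S {c}) ⊆ up B (down B (up R {a})) := up_anti B hsub
      exact up_closed hR {a} (this hb) a rfl
end

section
/- If a compatible relation R : ℬ → 𝒞 satisfies R↓∘R↑ ≤ cl_ℬ pointwise (where cl_ℬ = ℬ↓∘ℬ↑), then R is a monomorphism in Pol: for all compatible P, Q : 𝒜 → ℬ, P ⨟ R = Q ⨟ R implies P = Q. -/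
lemma down_up_down {A B : Type*} (R : A → B → Prop) (Y : Set B) :
    down R (up R (down R Y)) = down R Y := by
  ext a
  constructor
  · intro ha b hb
    exact ha b (fun a' ha' => ha' b hb)
  · intro ha b hb
    exact hb a ha

theorem stmt14 {Am Ap Bm Bp Cm Cp : Type*}
    (A : Am → Ap → Prop) (B : Bm → Bp → Prop) (C : Cm → Cp → Prop)
    (R : Bm → Cp → Prop) (hR : Compat B C R)
    (h : ∀ X : Set Bm, down R (up R X) ⊆ down B (up B X)) :
    ∀ P Q : Am → Bp → Prop, Compat A B P → Compat A B Q →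
      comp P B R = comp Q B R → P = Q := by
  intro P Q hP hQ hPQ
  have key : ∀ (P : Am → Bp → Prop), Compat A B P → ∀ (a : Am) (b : Bp),
      P a b ↔ ∀ c ∈ up R (down B {b}), comp P B R a c := by
    intro P hP a b
    set V : Set Bm := down B {b} with hVdef
    set Y : Set Cp := up R V with hYdef
    set W : Set Bp := ⋃ c ∈ Y, up B (down R {c}) with hWdef
    -- down R Y = V
    have hV : down R Y = V := by
      apply Set.Subset.antisymm
      · have hdud : down B (up B V) = V := down_up_down B {b}
        exact hdud ▸ h V
      · intro m hm c hc
        exact hc m hm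
    -- down B W = V
    have hW : down B W = V := by
      ext m
      constructor
      · intro hm
        rw [← hV]
        intro c hc
        have hmem : m ∈ down B (up B (down R {c})) := by
          intro bp hbp
          exact hm bp (Set.mem_biUnion hc hbp)
        rw [hR.1 {c}] at hmem
        exact hmem c rfl
      · intro hm bp hbp
        rw [hWdef] at hbp
        simp only [Set.mem_iUnion] at hbp
        obtain ⟨c, hc, hbp⟩ := hbp
        have hmc : m ∈ down R {c} := by
          intro c' hc'
          rw [Set.mem_singleton_iff] at hc'
          rw [hc']
          rw [← hV] at hm
          exact hm c hc
        exact hbp m hmc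
    -- down P {b} = down P W
    have hPb : down P {b} = down P W := by
      have e1 : down P (up B (down B {b})) = down P {b} := hP.2 {b}
      have e2 : down P (up B (down B W)) = down P W := hP.2 W
      rw [hW] at e2
      rw [← hVdef] at e1
      rw [← e1, ← e2]
    constructor
    · intro hpab c hc
      intro bp hbp
      have : bp ∈ W := Set.mem_biUnion hc hbp
      have ha : a ∈ down P {b} := by
        intro b' hb'
        rw [Set.mem_singleton_iff] at hb'
        subst hb'
        exact hpab
      rw [hPb] at ha
      exact ha bp this
    · intro hc
      have ha : a ∈ down P W := by
        intro bp hbp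
        rw [hWdef] at hbp
        simp only [Set.mem_iUnion] at hbp
        obtain ⟨c, hcY, hbp⟩ := hbp
        exact hc c hcY bp hbp
      rw [← hPb] at ha
      exact ha b rfl
  funext a b
  apply propext
  rw [key P hP a b, key Q hQ a b, hPQ]
end

section
/- For an INF morphism h : M → L between complete lattices (h preserves arbitrary infima), the relation C(h) ⊆ L × M defined by a C(h) b iff a ≤ h(b) is compatible with the polarities C(L) = (L,L,≤) and C(M) = (M,M,≤); moreover C(h)↓(Y) = ↓h(⋀Y) and C(h)↑(X) = ↑h_*(⋁X), where h_* is the left adjoint of h. Furthermore C preserves composition: for g : N → M and h : M → L both preserving infima, C(h∘g) = C(h) ⨟ C(g), i.e., C(h∘g)↓ = C(h)↓ ∘ (≤_M)↑ ∘ C(g)↓. -/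
lemma down_le {L : Type*} [CompleteLattice L] (Y : Set L) :
    down ((· ≤ ·) : L → L → Prop) Y = Set.Iic (sInf Y) := by
  ext a; simp [down, Set.mem_Iic, le_sInf_iff]

lemma up_le_Iic {L : Type*} [CompleteLattice L] (m : L) :
    up ((· ≤ ·) : L → L → Prop) (Set.Iic m) = Set.Ici m := by
  ext b
  constructor
  · intro hb; exact hb m le_rfl
  · intro hb a ha; exact le_trans ha hb

lemma down_le_Ici {L : Type*} [CompleteLattice L] (m : L) :
    down ((· ≤ ·) : L → L → Prop) (Set.Ici m) = Set.Iic m := by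
  ext a
  constructor
  · intro ha; exact ha m le_rfl
  · intro ha b hb; exact le_trans ha hb

lemma down_R {L M : Type*} [CompleteLattice L] [CompleteLattice M]
    (h : M → L) (hinf : ∀ s : Set M, h (sInf s) = sInf (h '' s)) (Y : Set M) :
    down (fun (a : L) (b : M) => a ≤ h b) Y = Set.Iic (h (sInf Y)) := by
  ext a
  simp only [down, Set.mem_setOf_eq, Set.mem_Iic, hinf, le_sInf_iff,
    Set.forall_mem_image]

theorem stmt18 {L M N : Type*} [CompleteLattice L] [CompleteLattice M] [CompleteLattice N]
    (h : M → L) (hinf : ∀ s : Set M, h (sInf s) = sInf (h '' s))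
    (g : N → M) (ginf : ∀ s : Set N, g (sInf s) = sInf (g '' s)) :
    Compat ((· ≤ ·) : L → L → Prop) ((· ≤ ·) : M → M → Prop) (fun a b => a ≤ h b) ∧
    (∀ Y : Set M, down (fun (a : L) (b : M) => a ≤ h b) Y = Set.Iic (h (sInf Y))) ∧
    (∀ hs : L → M, GaloisConnection hs h →
      ∀ X : Set L, up (fun (a : L) (b : M) => a ≤ h b) X = Set.Ici (hs (sSup X))) ∧
    comp (fun (a : L) (b : M) => a ≤ h b) ((· ≤ ·) : M → M → Prop)
        (fun (b : M) (c : N) => b ≤ g c)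
      = fun a c => a ≤ h (g c) := by
  refine ⟨⟨?_, ?_⟩, down_R h hinf, ?_, ?_⟩
  · intro Y
    rw [down_R h hinf, up_le_Iic, down_le_Ici]
  · intro Y
    rw [down_le, up_le_Iic, down_R h hinf, down_R h hinf, csInf_Ici]
  · intro hs gc X
    ext b
    simp only [up, Set.mem_setOf_eq, Set.mem_Ici, gc _ b, ← sSup_le_iff]
  · funext a c
    have : down (fun (b : M) (c : N) => b ≤ g c) {c} = Set.Iic (g c) := by
      ext b; simp [down]
    simp only [comp, this, up_le_Iic, down_R h hinf, csInf_Ici, Set.mem_Iic]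
end
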